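/- If X* = (X*₁,...,X*ₙ) is a Pareto optimal allocation of X, then for any β ∈ ℝ and any indices j ≠ k, the allocation obtained by replacing X*_j by X*_j + β and X*_k by X*_k − β is also Pareto optimal. -/
import Mathlib


/-- Transferring a constant amount `β` from agent `k` to agent `j` in a Pareto optimal
allocation yields another Pareto optimal allocation. -/
theorem stmt_7 {Ω : Type*} (n : ℕ) (X : Ω → ℝ) (b c : Fin n → ℝ)
    (V : Fin n → (Ω → ℝ) → ℝ)
    (hcash : ∀ (i : Fin n) (Y : Ω → ℝ) (a : ℝ),
      V i (fun ω => Y ω + a) = V i Y + (1 + b i + c i) * a)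
    (Xstar : Fin n → Ω → ℝ) (hsum : ∀ ω, ∑ i, Xstar i ω = X ω)
    (hPO : ∀ Y : Fin n → Ω → ℝ, (∀ ω, ∑ i, Y i ω = X ω) →
      (∀ i, V i (Y i) ≤ V i (Xstar i)) → ∀ i, V i (Y i) = V i (Xstar i))
    (β : ℝ) (j k : Fin n) (hjk : j ≠ k) :
    (∀ ω, ∑ i, (fun i ω => Xstar i ω + (if i = j then β else 0) - (if i = k then β else 0)) i ω
        = X ω) ∧
    (∀ Y : Fin n → Ω → ℝ, (∀ ω, ∑ i, Y i ω = X ω) →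
      (∀ i, V i (Y i) ≤
        V i ((fun i ω => Xstar i ω + (if i = j then β else 0) - (if i = k then β else 0)) i)) →
      ∀ i, V i (Y i) =
        V i ((fun i ω => Xstar i ω + (if i = j then β else 0) - (if i = k then β else 0)) i)) := by
  set δ : Fin n → ℝ := fun i => (if i = j then β else 0) - (if i = k then β else 0) with hδ
  have hδsum : ∑ i, δ i = 0 := by
    simp [hδ, Finset.sum_sub_distrib, Finset.sum_ite_eq', hjk]
  have hVZ : ∀ i, V i ((fun i ω => Xstar i ω + (if i = j then β else 0)
      - (if i = k then β else 0)) i) = V i (Xstar i) + (1 + b i + c i) * δ i := by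
    intro i
    have : (fun ω => Xstar i ω + (if i = j then β else 0) - (if i = k then β else 0))
        = fun ω => Xstar i ω + δ i := by
      funext ω; simp [hδ]; ring
    have h2 : ((fun i ω => Xstar i ω + (if i = j then β else 0)
        - (if i = k then β else 0)) i) = fun ω => Xstar i ω + δ i := this
    rw [h2, hcash]
  constructor
  · intro ω
    have : ∑ i, (Xstar i ω + (if i = j then β else 0) - (if i = k then β else 0))
        = (∑ i, Xstar i ω) + ∑ i, δ i := by
      rw [← Finset.sum_add_distrib]
      apply Finset.sum_congr rfl
      intro i _; simp [hδ]; ring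
    simpa [this, hδsum] using hsum ω
  · intro Y hYsum hYle i
    set Y' : Fin n → Ω → ℝ := fun i ω => Y i ω + (-δ i) with hY'
    have hY'sum : ∀ ω, ∑ i, Y' i ω = X ω := by
      intro ω
      have : ∑ i, Y' i ω = (∑ i, Y i ω) + ∑ i, -δ i := by
        rw [← Finset.sum_add_distrib]
      simp [this, hYsum ω, Finset.sum_neg_distrib, hδsum]
    have hVY' : ∀ i, V i (Y' i) = V i (Y i) - (1 + b i + c i) * δ i := by
      intro i
      have := hcash i (Y i) (-δ i)
      simp only [hY']
      rw [this]; ring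
    have hle : ∀ i, V i (Y' i) ≤ V i (Xstar i) := by
      intro i
      have := hYle i
      rw [hVZ i] at this
      rw [hVY' i]; linarith
    have heq := hPO Y' hY'sum hle i
    rw [hVY' i] at heq
    rw [hVZ i]; linarith
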